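/- Let S be a group decomposed as an internal direct product S = S₁ × S₂, and let P ≤ S be a subgroup containing its centralizer (C_S(P) ≤ P). Define Z̃ₙ(P) inductively by Z̃₀(P) = 1 and Z̃ₙ(P)/Z̃ₙ₋₁(P) = Ω₁(Z(P/Z̃ₙ₋₁(P))). Let P̄ = pr₁(P) × pr₂(P) where prᵢ are the projections. Then Z̃ₙ(P) = P ∩ Z̃ₙ(P̄) for all n ≥ 0. -/
import Mathlib



/-- `Ω₁(Z(G))`: the subgroup of the center of `G` generated by the elements `x`
with `x ^ p = 1`. -/
def omegaOneCenter (p : ℕ) (G : Type*) [Group G] : Subgroup G :=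
  Subgroup.closure {x : G | x ∈ Subgroup.center G ∧ x ^ p = 1}

theorem omegaOneCenter_le_center (p : ℕ) (G : Type*) [Group G] :
    omegaOneCenter p G ≤ Subgroup.center G :=
  (Subgroup.closure_le _).2 fun _ hx => hx.1

instance omegaOneCenter_normal (p : ℕ) (G : Type*) [Group G] :
    (omegaOneCenter p G).Normal := by
  constructor
  intro n hn g
  have hc := Subgroup.mem_center_iff.mp (omegaOneCenter_le_center p G hn) g
  rw [hc, mul_inv_cancel_right]
  exact hn

/-- The ascending chain `Z̃ₙ(S)`: `Z̃₀(S) = 1` and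
`Z̃ₙ(S)/Z̃ₙ₋₁(S) = Ω₁(Z(S/Z̃ₙ₋₁(S)))`, packaged with a proof of normality. -/
def ZtilAux (p : ℕ) (S : Type*) [Group S] : ℕ → {H : Subgroup S // H.Normal}
  | 0 => ⟨⊥, inferInstance⟩
  | n + 1 =>
    let Z := ZtilAux p S n
    haveI := Z.2
    ⟨(omegaOneCenter p (S ⧸ Z.1)).comap (QuotientGroup.mk' Z.1),
      Subgroup.Normal.comap (omegaOneCenter_normal p _) _⟩

/-- `Z̃ₙ(S)`, as a subgroup of `S`. -/
def Ztil (p : ℕ) (S : Type*) [Group S] (n : ℕ) : Subgroup S := (ZtilAux p S n).1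

section Aux
variable (p : ℕ) {G : Type*} [Group G]

lemma mem_omegaOneCenter {x : G} :
    x ∈ omegaOneCenter p G ↔ x ∈ Subgroup.center G ∧ x ^ p = 1 := by
  let K : Subgroup G :=
  { carrier := {x : G | x ∈ Subgroup.center G ∧ x ^ p = 1}
    one_mem' := ⟨Subgroup.one_mem _, one_pow p⟩
    mul_mem' := by
      rintro a b ⟨ha, ha'⟩ ⟨hb, hb'⟩
      refine ⟨Subgroup.mul_mem _ ha hb, ?_⟩
      have hc : Commute a b := (Subgroup.mem_center_iff.mp ha b).symm
      rw [hc.mul_pow, ha', hb', one_mul]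
    inv_mem' := by
      rintro a ⟨ha, ha'⟩
      exact ⟨Subgroup.inv_mem _ ha, by rw [inv_pow, ha', inv_one]⟩ }
  have : omegaOneCenter p G = K := Subgroup.closure_eq K
  rw [omegaOneCenter]
  rw [show {x : G | x ∈ Subgroup.center G ∧ x ^ p = 1} = (K : Set G) from rfl]
  rw [Subgroup.closure_eq K]
  exact Iff.rfl

instance Ztil_normal (n : ℕ) : (Ztil p G n).Normal := (ZtilAux p G n).2

lemma Ztil_zero : Ztil p G 0 = ⊥ := rfl

lemma mem_Ztil_succ {n : ℕ} {x : G} :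
    x ∈ Ztil p G (n + 1) ↔
      (∀ g : G, (g * x)⁻¹ * (x * g) ∈ Ztil p G n) ∧ x ^ p ∈ Ztil p G n := by
  have h1 : x ∈ Ztil p G (n+1) ↔
      ((x : G ⧸ Ztil p G n) ∈ Subgroup.center _ ∧ (x : G ⧸ Ztil p G n) ^ p = 1) := by
    rw [show Ztil p G (n+1) = (omegaOneCenter p (G ⧸ Ztil p G n)).comap
        (QuotientGroup.mk' (Ztil p G n)) from rfl]
    rw [Subgroup.mem_comap]
    exact mem_omegaOneCenter p
  rw [h1]
  constructor
  · rintro ⟨hc, hp⟩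
    refine ⟨fun g => ?_, ?_⟩
    · have := Subgroup.mem_center_iff.mp hc (g : G ⧸ Ztil p G n)
      rw [← QuotientGroup.mk_mul, ← QuotientGroup.mk_mul] at this
      exact QuotientGroup.eq.mp this
    · rw [← QuotientGroup.mk_pow] at hp
      exact (QuotientGroup.eq_one_iff _).mp hp
  · rintro ⟨hc, hp⟩
    refine ⟨Subgroup.mem_center_iff.mpr fun q => ?_, ?_⟩
    · induction q using QuotientGroup.induction_on with
      | H g => exact (QuotientGroup.eq).mpr (hc g)
    · rw [← QuotientGroup.mk_pow]
      exact (QuotientGroup.eq_one_iff _).mpr hp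

end Aux

section Prod
variable (p : ℕ)

lemma Ztil_prod (G₁ G₂ : Type*) [Group G₁] [Group G₂] (n : ℕ) :
    Ztil p (G₁ × G₂) n = (Ztil p G₁ n).prod (Ztil p G₂ n) := by
  induction n with
  | zero => exact (Subgroup.bot_prod_bot).symm
  | succ n ih =>
    ext x
    rw [mem_Ztil_succ, Subgroup.mem_prod, mem_Ztil_succ, mem_Ztil_succ]
    simp only [ih, Subgroup.mem_prod, Prod.forall]
    constructor
    · rintro ⟨hc, hp1, hp2⟩
      exact ⟨⟨fun g => (hc g x.2).1, hp1⟩, ⟨fun g => (hc x.1 g).2, hp2⟩⟩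
    · rintro ⟨⟨hc1, hp1⟩, ⟨hc2, hp2⟩⟩
      exact ⟨fun g₁ g₂ => ⟨hc1 g₁, hc2 g₂⟩, hp1, hp2⟩

lemma Ztil_equiv {G G' : Type*} [Group G] [Group G'] (e : G ≃* G') (n : ℕ) (x : G) :
    x ∈ Ztil p G n ↔ e x ∈ Ztil p G' n := by
  induction n generalizing x with
  | zero =>
    rw [Ztil_zero, Ztil_zero, Subgroup.mem_bot, Subgroup.mem_bot]
    constructor
    · rintro rfl; exact map_one e
    · intro h; exact e.injective (by rw [h, map_one])
  | succ n ih =>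
    rw [mem_Ztil_succ, mem_Ztil_succ]
    constructor
    · rintro ⟨hc, hp⟩
      refine ⟨fun g' => ?_, ?_⟩
      · have := (ih _).mp (hc (e.symm g'))
        simpa [map_mul, map_inv] using this
      · have := (ih _).mp hp
        simpa [map_pow] using this
    · rintro ⟨hc, hp⟩
      refine ⟨fun g => ?_, ?_⟩
      · refine (ih _).mpr ?_
        simpa [map_mul, map_inv] using hc (e g)
      · refine (ih _).mpr ?_
        simpa [map_pow] using hp

lemma Ztil_subgroup_prod {G₁ G₂ : Type*} [Group G₁] [Group G₂] (Q : Subgroup (G₁ × G₂))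
    (h1 : Q.map (MonoidHom.fst G₁ G₂) = ⊤) (h2 : Q.map (MonoidHom.snd G₁ G₂) = ⊤)
    (n : ℕ) (x : Q) :
    x ∈ Ztil p (↥Q) n ↔ (x : G₁ × G₂) ∈ Ztil p (G₁ × G₂) n := by
  induction n generalizing x with
  | zero =>
    rw [Ztil_zero, Ztil_zero, Subgroup.mem_bot, Subgroup.mem_bot]
    exact ⟨fun h => by rw [h]; rfl, fun h => Subtype.ext h⟩
  | succ n ih =>
    rw [mem_Ztil_succ, mem_Ztil_succ]
    have key : ∀ y : Q, ((y : G₁ × G₂) ∈ Ztil p (G₁ × G₂) n ↔ y ∈ Ztil p (↥Q) n) :=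
      fun y => (ih y).symm
    constructor
    · rintro ⟨hc, hp⟩
      constructor
      · rintro ⟨c, d⟩
        obtain ⟨q, hq, hq1⟩ : ∃ q ∈ Q, (MonoidHom.fst G₁ G₂) q = c := by
          have : c ∈ Q.map (MonoidHom.fst G₁ G₂) := by rw [h1]; trivial
          simpa [Subgroup.mem_map] using this
        obtain ⟨r, hr, hr2⟩ : ∃ r ∈ Q, (MonoidHom.snd G₁ G₂) r = d := by
          have : d ∈ Q.map (MonoidHom.snd G₁ G₂) := by rw [h2]; trivial
          simpa [Subgroup.mem_map] using this
        have hcq := (key _).mpr (hc ⟨q, hq⟩)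
        have hcr := (key _).mpr (hc ⟨r, hr⟩)
        rw [Ztil_prod] at hcq hcr ⊢
        rw [Subgroup.mem_prod] at hcq hcr ⊢
        refine ⟨?_, ?_⟩
        · have := hcq.1
          simpa [← hq1] using this
        · have := hcr.2
          simpa [← hr2] using this
      · have := (key _).mpr hp
        simpa using this
    · rintro ⟨hc, hp⟩
      constructor
      · intro g
        exact (key _).mp (hc (g : G₁ × G₂))
      · refine (key _).mp ?_
        simpa using hp

end Prod


/-- Let `S = S₁ × S₂` and let `P ≤ S` contain its centralizer. With
`P̄ = pr₁(P) × pr₂(P)`, we have `Z̃ₙ(P) = P ∩ Z̃ₙ(P̄)` for all `n`. -/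
theorem Ztil_eq_inf_Ztil_prod (p : ℕ) [Fact p.Prime]
    (S₁ S₂ : Type*) [Group S₁] [Group S₂] (P : Subgroup (S₁ × S₂))
    (hcent : Subgroup.centralizer (P : Set (S₁ × S₂)) ≤ P) :
    ∀ n : ℕ,
      (Ztil p (↥P) n).map P.subtype =
        P ⊓ (Ztil p (↥((P.map (MonoidHom.fst S₁ S₂)).prod (P.map (MonoidHom.snd S₁ S₂)))) n).map
            ((P.map (MonoidHom.fst S₁ S₂)).prod (P.map (MonoidHom.snd S₁ S₂))).subtype := by
  intro n
  set P₁ := P.map (MonoidHom.fst S₁ S₂) with hP₁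
  set P₂ := P.map (MonoidHom.snd S₁ S₂) with hP₂
  set Pb := P₁.prod P₂ with hPb
  have hle : P ≤ Pb := fun x hx => ⟨⟨x, hx, rfl⟩, ⟨x, hx, rfl⟩⟩
  let e : ↥Pb ≃* ↥P₁ × ↥P₂ := Subgroup.prodEquiv P₁ P₂
  let A : Subgroup ↥Pb := P.subgroupOf Pb
  let Q : Subgroup (↥P₁ × ↥P₂) := A.map (e : ↥Pb →* ↥P₁ × ↥P₂)
  let f1 : ↥A ≃* ↥P := Subgroup.subgroupOfEquivOfLe hle
  let f2 : ↥A ≃* ↥Q := e.subgroupMap A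
  let f : ↥P ≃* ↥Q := f1.symm.trans f2
  have h1 : Q.map (MonoidHom.fst ↥P₁ ↥P₂) = ⊤ := by
    rw [eq_top_iff]
    rintro ⟨a, x, hx, rfl⟩ -
    refine ⟨f ⟨x, hx⟩, (f2 (f1.symm ⟨x, hx⟩)).2, rfl⟩
  have h2 : Q.map (MonoidHom.snd ↥P₁ ↥P₂) = ⊤ := by
    rw [eq_top_iff]
    rintro ⟨a, x, hx, rfl⟩ -
    refine ⟨f ⟨x, hx⟩, (f2 (f1.symm ⟨x, hx⟩)).2, rfl⟩
  have key : ∀ (y : ↥P), y ∈ Ztil p ↥P n ↔ (⟨(y : S₁ × S₂), hle y.2⟩ : ↥Pb) ∈ Ztil p ↥Pb n := by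
    intro y
    rw [Ztil_equiv p f n y, Ztil_subgroup_prod p Q h1 h2 n (f y), Ztil_equiv p e n]
    rfl
  ext x
  simp only [Subgroup.mem_map, Subgroup.mem_inf]
  constructor
  · rintro ⟨y, hy, rfl⟩
    exact ⟨y.2, ⟨_, (key y).mp hy, rfl⟩⟩
  · rintro ⟨hxP, z, hz, rfl⟩
    refine ⟨⟨(z : S₁ × S₂), hxP⟩, (key _).mpr ?_, rfl⟩
    convert hz
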